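/- Let f be a piecewise-linear periodic function which is injective on its fundamental domain [0,P), having ℓ linear pieces whose slopes have μ distinct magnitudes. Then for any α ∈ ℝ and N ∈ ℕ, the number of distinct gap lengths satisfies |G_{f,α,N}| ≤ 3μ + ℓ. -/
import Mathlib


/-- The set of distinct values `f (d*α + β)` for `1 ≤ d ≤ N`. -/
def orbitSet (f : ℝ → ℝ) (α β : ℝ) (N : ℕ) : Set ℝ :=
  {y | ∃ d : ℕ, 1 ≤ d ∧ d ≤ N ∧ y = f (d * α + β)}

/-- Gaps between consecutive (nearest-neighbor) elements of a set of reals. -/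
def consGaps (S : Set ℝ) : Set ℝ :=
  {g | ∃ a ∈ S, ∃ b ∈ S, a < b ∧ (∀ x ∈ S, x ≤ a ∨ b ≤ x) ∧ g = b - a}

/-- The gap length set `G_{f,α,β,N}`: consecutive gaps together with the
extremal gap `s₁ - inf f + sup f - s_n`. -/
def gapSet (f : ℝ → ℝ) (α β : ℝ) (N : ℕ) : Set ℝ :=
  consGaps (orbitSet f α β N) ∪
    {sInf (orbitSet f α β N) - sInf (Set.range f) + sSup (Set.range f) -
      sSup (orbitSet f α β N)}

private lemma fract_eq_of {x : ℝ} (y : ℝ) (z : ℤ) (h : y - x = z) (h0 : 0 ≤ x) (h1 : x < 1) :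
    Int.fract y = x := by
  have hy : y = x + z := by linarith
  rw [hy, Int.fract_add_intCast, Int.fract_eq_self.2 ⟨h0, h1⟩]

private lemma three_gap (θ : ℝ) (N : ℕ) :
    ∃ T : Finset ℝ, T.card ≤ 3 ∧
      consGaps {x | ∃ d : ℕ, 1 ≤ d ∧ d ≤ N ∧ x = Int.fract (d * θ)} ⊆ ↑T := by
  classical
  set F : ℕ → ℝ := fun d => Int.fract (d * θ) with hFdef
  have hfr : ∀ d : ℕ, F d = (d : ℝ) * θ - ⌊(d : ℝ) * θ⌋ := fun d => rfl
  by_cases hdeg : ∀ d : ℕ, 1 ≤ d → d ≤ N → F d = 0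
  · refine ⟨∅, by simp, ?_⟩
    rintro g ⟨a, ⟨d, hd1, hd2, rfl⟩, b, ⟨e, he1, he2, rfl⟩, hab, -, rfl⟩
    have h1 := hdeg d hd1 hd2
    have h2 := hdeg e he1 he2
    simp only [hFdef] at h1 h2
    rw [h1, h2] at hab
    exact absurd hab (lt_irrefl 0)
  · push_neg at hdeg
    obtain ⟨d₀, hd₀1, hd₀2, hd₀⟩ := hdeg
    have hpos : ((Finset.Icc 1 N).filter (fun d => F d ≠ 0)).Nonempty :=
      ⟨d₀, by simp [hd₀1, hd₀2, hd₀]⟩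
    obtain ⟨p, hpmem, hpmin⟩ := Finset.exists_min_image _ F hpos
    obtain ⟨q, hqmem, hqmax⟩ := Finset.exists_max_image (Finset.Icc 1 N) F ⟨d₀, by simp [hd₀1, hd₀2]⟩
    simp only [Finset.mem_filter, Finset.mem_Icc] at hpmem hqmem
    have hmin : ∀ d : ℕ, 1 ≤ d → d ≤ N → F d ≠ 0 → F p ≤ F d := by
      intro d h1 h2 h3; exact hpmin d (by simp [Finset.mem_filter, Finset.mem_Icc, h1, h2, h3])
    have hmax : ∀ d : ℕ, 1 ≤ d → d ≤ N → F d ≤ F q := by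
      intro d h1 h2; exact hqmax d (by simp [Finset.mem_Icc, h1, h2])
    set vp := F p with hvp
    set vq := F q with hvq
    have hvp0 : 0 < vp := lt_of_le_of_ne (Int.fract_nonneg _) (Ne.symm hpmem.2)
    have hvq0 : 0 < vq := lt_of_lt_of_le hvp0 (hmax p hpmem.1.1 hpmem.1.2)
    have hvq1 : vq < 1 := Int.fract_lt_one _
    have hpq : vp ≤ vq := hmax p hpmem.1.1 hpmem.1.2
    refine ⟨{vp, 1 - vq, vp + (1 - vq)}, ?_, ?_⟩
    · refine le_trans (Finset.card_insert_le _ _) (Nat.succ_le_succ ?_)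
      refine le_trans (Finset.card_insert_le _ _) (Nat.succ_le_succ ?_)
      simp
    rintro g ⟨u, ⟨a, ha1, ha2, rfl⟩, v, ⟨b, hb1, hb2, rfl⟩, huv, hcons, rfl⟩
    set g := F b - F a with hgdef
    have hg0 : 0 < g := by simp [hgdef]; linarith
    have hg1 : g < 1 := by
      have := Int.fract_lt_one ((b:ℝ) * θ); have := Int.fract_nonneg ((a:ℝ) * θ)
      simp only [hgdef]; unfold F; linarith
    -- the "arc position" function
    set δ : ℕ → ℝ := fun c => Int.fract (((c : ℝ) - a) * θ) with hδdef
    have hstep : ∀ c : ℕ, 0 ≤ F a + δ c → F a + δ c < 1 → F c = F a + δ c := by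
      intro c h0 h1
      refine fract_eq_of _ (⌊(a:ℝ) * θ⌋ + ⌊((c:ℝ) - a) * θ⌋) ?_ h0 h1
      have e1 := hfr a
      have e2 : δ c = ((c:ℝ) - a) * θ - ⌊((c:ℝ) - a) * θ⌋ := rfl
      push_cast
      linear_combination -e1 - e2
    have hFa0 : 0 ≤ F a := Int.fract_nonneg _
    have hFb1 : F b < 1 := Int.fract_lt_one _
    have hcons' : ∀ c : ℕ, 1 ≤ c → c ≤ N → F c ≤ F a ∨ F b ≤ F c :=
      fun c h1 h2 => hcons _ ⟨c, h1, h2, rfl⟩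
    have hblock : ∀ c : ℕ, 1 ≤ c → c ≤ N → ¬(0 < δ c ∧ δ c < g) := by
      rintro c h1 h2 ⟨l, r⟩
      have hδ0 : 0 ≤ δ c := Int.fract_nonneg _
      have hFc : F c = F a + δ c := by
        refine hstep c (by linarith) (by simp only [hgdef] at r; linarith)
      rcases hcons' c h1 h2 with h | h
      · rw [hFc] at h; linarith
      · rw [hFc] at h; simp only [hgdef] at r; linarith
    have hδb : δ b = g := by
      show Int.fract (((b:ℝ) - a) * θ) = g
      refine fract_eq_of _ (⌊(b:ℝ)*θ⌋ - ⌊(a:ℝ)*θ⌋) ?_ hg0.le hg1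
      have e1 : F a = (a:ℝ)*θ - ⌊(a:ℝ)*θ⌋ := hfr a
      have e2 : F b = (b:ℝ)*θ - ⌊(b:ℝ)*θ⌋ := hfr b
      push_cast
      linear_combination e1 - e2 - hgdef
    have hblock1 : vp < g → N < a + p := by
      intro hlt
      by_contra hc
      push_neg at hc
      have hδe : δ (a + p) = vp := by
        show Int.fract ((((a+p:ℕ):ℝ) - a) * θ) = vp
        have hcast : (((a+p:ℕ):ℝ) - a) = (p:ℝ) := by push_cast; ring
        rw [hcast]
      exact hblock (a+p) (by omega) hc ⟨by rw [hδe]; exact hvp0, by rw [hδe]; exact hlt⟩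
    have hblock2 : 1 - vq < g → a ≤ q := by
      intro hlt; by_contra hc; push_neg at hc
      have hδe : δ (a - q) = 1 - vq := by
        show Int.fract ((((a - q:ℕ):ℝ) - a) * θ) = 1 - vq
        have hcast : ((((a - q:ℕ)):ℝ) - a) * θ = -((q:ℝ) * θ) := by
          push_cast [Nat.cast_sub hc.le]; ring
        rw [hcast, Int.fract_neg (by exact hvq0.ne')]
      exact hblock (a - q) (by omega) (by omega) ⟨by rw [hδe]; linarith, by rw [hδe]; exact hlt⟩
    have hblock3 : 1 - vq < g → vp < vq → a ≤ q → N < a + p → ¬ (vp + (1 - vq) < g) := by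
      intro h1 h2 h3 h4 hlt
      have hpN : p ≤ N := hpmem.1.2
      have hqN : q ≤ N := hqmem.2
      have hδe : δ (a + p - q) = vp + (1 - vq) := by
        show Int.fract ((((a + p - q:ℕ):ℝ) - a) * θ) = vp + (1 - vq)
        have hcast : (((a + p - q:ℕ):ℝ) - a) = (p:ℝ) - q := by
          push_cast [Nat.cast_sub (show q ≤ a + p by omega)]; ring
        rw [hcast]
        refine fract_eq_of _ (⌊(p:ℝ)*θ⌋ - ⌊(q:ℝ)*θ⌋ - 1) ?_ (by linarith) (by linarith)
        have e1 : vp = (p:ℝ)*θ - ⌊(p:ℝ)*θ⌋ := hvp.trans (hfr p)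
        have e2 : vq = (q:ℝ)*θ - ⌊(q:ℝ)*θ⌋ := hvq.trans (hfr q)
        push_cast
        linear_combination e2 - e1
      exact hblock (a + p - q) (by omega) (by omega)
        ⟨by rw [hδe]; linarith, by rw [hδe]; exact hlt⟩
    rcases Nat.lt_trichotomy a b with hab | hab | hab
    · -- a < b
      set r := b - a with hr
      have hr1 : 1 ≤ r := by omega
      have hrN : r ≤ N := by omega
      have hgr : F r = g := by
        show Int.fract ((r:ℝ) * θ) = g
        have hcast : ((r:ℕ):ℝ) = (b:ℝ) - a := by rw [hr]; push_cast [Nat.cast_sub hab.le]; ring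
        rw [hcast]
        exact hδb
      have hvpg : vp ≤ g := by rw [← hgr]; exact hmin r hr1 hrN (by rw [hgr]; exact hg0.ne')
      by_cases hgvp : g = vp
      · simp [hgvp]
      · have hvplt : vp < g := lt_of_le_of_ne hvpg (Ne.symm hgvp)
        have hNap := hblock1 hvplt
        rcases Nat.lt_trichotomy r p with hrp | hrp | hrp
        · -- r < p
          have hs1 : 1 ≤ p - r := by omega
          have hFs : F (p - r) = 1 - (g - vp) := by
            show Int.fract (((p - r:ℕ):ℝ) * θ) = 1 - (g - vp)
            have hcast : ((p - r:ℕ):ℝ) = (p:ℝ) - r := by push_cast [Nat.cast_sub hrp.le]; ring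
            rw [hcast]
            refine fract_eq_of _ (⌊(p:ℝ)*θ⌋ - ⌊(r:ℝ)*θ⌋ - 1) ?_ (by linarith) (by linarith)
            have e1 : vp = (p:ℝ)*θ - ⌊(p:ℝ)*θ⌋ := hvp.trans (hfr p)
            have e2 : g = (r:ℝ)*θ - ⌊(r:ℝ)*θ⌋ := hgr.symm.trans (hfr r)
            push_cast
            linear_combination e2 - e1
          have hge : vp + (1 - vq) ≤ g := by
            have := hmax (p - r) hs1 (by omega)
            rw [hFs] at this; linarith
          have hvpvq : vp < vq := by
            have := hmax (p - r) hs1 (by omega)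
            rw [hFs] at this; linarith
          have h3 := hblock3 (by linarith) hvpvq (hblock2 (by linarith)) hNap
          have hfin : g = vp + (1 - vq) := le_antisymm (not_lt.mp h3) hge
          simp [hfin]
        · -- r = p
          exact absurd (show g = vp by rw [← hgr, hrp]) hgvp
        · -- r > p
          omega
    · -- a = b
      exfalso
      have hgg := hg0
      rw [hgdef, hab] at hgg
      simp at hgg
    · -- b < a
      set s := a - b with hs
      have hs1 : 1 ≤ s := by omega
      have hsN : s ≤ N := by omega
      have hscast : ((s:ℕ):ℝ) = (a:ℝ) - b := by rw [hs]; push_cast [Nat.cast_sub hab.le]; ring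
      have hcastb : ((b:ℝ) - a) * θ = -((s:ℝ) * θ) := by rw [hscast]; ring
      have hFs0 : Int.fract ((s:ℝ) * θ) ≠ 0 := by
        intro h0
        have hz : δ b = 0 := by
          show Int.fract (((b:ℝ) - a) * θ) = 0
          rw [hcastb]
          exact Int.fract_neg_eq_zero.mpr h0
        rw [hδb] at hz
        linarith
      have hFs : F s = 1 - g := by
        show Int.fract ((s:ℝ) * θ) = 1 - g
        have h1 : Int.fract (-((s:ℝ) * θ)) = 1 - Int.fract ((s:ℝ) * θ) := Int.fract_neg hFs0
        have h2 : Int.fract (-((s:ℝ) * θ)) = g := by rw [← hcastb]; exact hδb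
        linarith
      have hwqg : 1 - vq ≤ g := by
        have := hmax s hs1 hsN
        rw [hFs] at this; linarith
      by_cases hgwq : g = 1 - vq
      · simp [hgwq]
      · have hlt : 1 - vq < g := lt_of_le_of_ne hwqg (Ne.symm hgwq)
        have haq := hblock2 hlt
        have hbq : N < b + q := by
          by_contra hc; push_neg at hc
          have hδc : δ (b + q) = g - (1 - vq) := by
            show Int.fract ((((b + q:ℕ):ℝ) - a) * θ) = g - (1 - vq)
            have hcast : (((b + q:ℕ):ℝ) - a) = (q:ℝ) - s := by
              rw [hscast]; push_cast; ring
            rw [hcast]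
            refine fract_eq_of _ (⌊(q:ℝ)*θ⌋ - ⌊(s:ℝ)*θ⌋) ?_ (by linarith) (by linarith)
            have e1 : vq = (q:ℝ)*θ - ⌊(q:ℝ)*θ⌋ := hvq.trans (hfr q)
            have e2 : (1:ℝ) - g = (s:ℝ)*θ - ⌊(s:ℝ)*θ⌋ := hFs.symm.trans (hfr s)
            push_cast
            linear_combination e2 - e1
          exact hblock (b + q) (by omega) hc
            ⟨by rw [hδc]; linarith, by rw [hδc]; linarith⟩
        rcases Nat.lt_trichotomy s q with hsq | hsq | hsq
        · -- s < q
          have hu1 : 1 ≤ q - s := by omega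
          have hFu : F (q - s) = g - (1 - vq) := by
            show Int.fract (((q - s:ℕ):ℝ) * θ) = g - (1 - vq)
            have hcast : ((q - s:ℕ):ℝ) = (q:ℝ) - s := by push_cast [Nat.cast_sub hsq.le]; ring
            rw [hcast]
            refine fract_eq_of _ (⌊(q:ℝ)*θ⌋ - ⌊(s:ℝ)*θ⌋) ?_ (by linarith) (by linarith)
            have e1 : vq = (q:ℝ)*θ - ⌊(q:ℝ)*θ⌋ := hvq.trans (hfr q)
            have e2 : (1:ℝ) - g = (s:ℝ)*θ - ⌊(s:ℝ)*θ⌋ := hFs.symm.trans (hfr s)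
            push_cast
            linear_combination e2 - e1
          have hge : vp + (1 - vq) ≤ g := by
            have := hmin (q - s) hu1 (by omega) (by rw [hFu]; exact (show (0:ℝ) < g - (1 - vq) by linarith).ne')
            rw [hFu] at this; linarith
          have hvplt : vp < g := by linarith
          have hNap := hblock1 hvplt
          have hvpvq : vp < vq := by linarith
          have h3 := hblock3 hlt hvpvq haq hNap
          have hfin : g = vp + (1 - vq) := le_antisymm (not_lt.mp h3) hge
          simp [hfin]
        · -- s = q
          refine absurd ?_ hgwq
          have : vq = 1 - g := by rw [hvq, ← hsq, hFs]
          linarith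
        · -- s > q
          omega

/-- For a piecewise-linear periodic function injective on its fundamental
domain `[0,P)`, with `ℓ` pieces whose slopes have `μ` distinct magnitudes,
the gap length set has at most `3μ + ℓ` elements. -/
theorem gaps_of_injective_piecewise_linear (P : ℝ) (hP : 0 < P)
    (f : ℝ → ℝ) (hper : ∀ x, f (x + P) = f x)
    (ℓ : ℕ) (hl : 0 < ℓ) (t m c : ℕ → ℝ)
    (ht0 : t 0 = 0) (htl : t ℓ = P)
    (htmono : ∀ i < ℓ, t i < t (i + 1))
    (hpiece : ∀ i < ℓ, ∀ x ∈ Set.Ico (t i) (t (i + 1)), f x = m i * x + c i)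
    (hmax : ∀ i, i + 1 < ℓ → (m i, c i) ≠ (m (i + 1), c (i + 1)))
    (hinj : Set.InjOn f (Set.Ico 0 P))
    (μ : ℕ) (hμ : μ = (Finset.image (fun i => |m i|) (Finset.range ℓ)).card)
    (α : ℝ) (N : ℕ) :
    (gapSet f α 0 N).ncard ≤ 3 * μ + ℓ := by
  classical
  rcases Nat.eq_zero_or_pos N with hN0 | hN1
  · subst hN0
    have hOempty : orbitSet f α 0 0 = ∅ := by
      ext y; simp only [orbitSet, Set.mem_setOf_eq, Set.mem_empty_iff_false, iff_false]
      rintro ⟨d, h1, h2, -⟩; omega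
    have hcg : consGaps (orbitSet f α 0 0) = ∅ := by
      rw [hOempty]; ext g
      simp only [consGaps, Set.mem_setOf_eq, Set.mem_empty_iff_false, iff_false]
      rintro ⟨a, ha, -⟩; exact ha
    rw [gapSet, hcg, Set.empty_union, Set.ncard_singleton]
    omega
  have hPne : P ≠ 0 := hP.ne'
  set θ : ℝ := α / P with hθ
  -- division helpers
  have hdivneg : ∀ u v w : ℝ, w < 0 → w * u ≤ w * v → v ≤ u := by
    intro u v w hw h
    by_contra hc; push_neg at hc
    nlinarith [mul_pos (sub_pos.mpr hc) (neg_pos.mpr hw)]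
  have hdivnegs : ∀ u v w : ℝ, w < 0 → w * u < w * v → v < u := by
    intro u v w hw h
    by_contra hc; push_neg at hc
    nlinarith [mul_nonneg (sub_nonneg.mpr hc) (neg_pos.mpr hw).le]
  have hdivpos : ∀ u v w : ℝ, 0 < w → w * u ≤ w * v → u ≤ v :=
    fun u v w hw h => le_of_mul_le_mul_left h hw
  have hdivposs : ∀ u v w : ℝ, 0 < w → w * u < w * v → u < v :=
    fun u v w hw h => lt_of_mul_lt_mul_left h hw.le
  -- periodicity over ℤ
  have hper' : ∀ x : ℝ, ∀ n : ℤ, f (x + n * P) = f x := by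
    intro x n
    have h : Function.Periodic f P := hper
    have := h.sub_int_mul_eq (n := n) (x := x + n * P)
    simpa using this.symm
  set pt : ℕ → ℝ := fun d => P * Int.fract (d * θ) with hpt
  have hptval : ∀ d : ℕ, f ((d:ℝ) * α + 0) = f (pt d) := by
    intro d
    have key : P * ((d:ℝ) * θ) = (d:ℝ) * α := by rw [hθ]; field_simp
    have e : Int.fract ((d:ℝ) * θ) = (d:ℝ) * θ - ⌊(d:ℝ) * θ⌋ := rfl
    have hdα : (d:ℝ) * α + 0 = pt d + ⌊(d:ℝ) * θ⌋ * P := by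
      show (d:ℝ) * α + 0 = P * Int.fract ((d:ℝ) * θ) + ⌊(d:ℝ) * θ⌋ * P
      rw [e]; linear_combination -key
    rw [hdα, hper']
  set X : Set ℝ := {x | ∃ d : ℕ, 1 ≤ d ∧ d ≤ N ∧ x = pt d} with hX
  have hSX : orbitSet f α 0 N = f '' X := by
    ext y; constructor
    · rintro ⟨d, h1, h2, rfl⟩
      exact ⟨pt d, ⟨d, h1, h2, rfl⟩, (hptval d).symm⟩
    · rintro ⟨x, ⟨d, h1, h2, rfl⟩, rfl⟩
      exact ⟨d, h1, h2, (hptval d).symm⟩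
  have hXfin : X.Finite := by
    have hsub : X ⊆ (fun d : ℕ => pt d) '' (Set.Icc 1 N) := by
      rintro x ⟨d, h1, h2, rfl⟩; exact ⟨d, ⟨h1, h2⟩, rfl⟩
    exact ((Set.finite_Icc 1 N).image _).subset hsub
  have hSfin : (orbitSet f α 0 N).Finite := by rw [hSX]; exact hXfin.image f
  have hSne : (orbitSet f α 0 N).Nonempty := ⟨f ((1:ℕ) * α + 0), 1, le_refl 1, hN1, by norm_num⟩
  have hXsub : X ⊆ Set.Ico 0 P := by
    rintro x ⟨d, h1, h2, rfl⟩
    refine ⟨mul_nonneg hP.le (Int.fract_nonneg _), ?_⟩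
    have := mul_lt_mul_of_pos_left (Int.fract_lt_one ((d:ℝ) * θ)) hP
    simpa using this
  -- three-gap for X
  obtain ⟨T₀, hT₀card, hT₀⟩ := three_gap θ N
  set T : Finset ℝ := T₀.image (fun x => P * x) with hT
  have hTcard : T.card ≤ 3 := le_trans (Finset.card_image_le) hT₀card
  have hXT : consGaps X ⊆ ↑T := by
    rintro g ⟨x, ⟨dx, hdx1, hdx2, rfl⟩, y, ⟨dy, hdy1, hdy2, rfl⟩, hxy, hcons, rfl⟩
    have hmem : Int.fract ((dy:ℝ) * θ) - Int.fract ((dx:ℝ) * θ) ∈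
        consGaps {x | ∃ d : ℕ, 1 ≤ d ∧ d ≤ N ∧ x = Int.fract (d * θ)} := by
      refine ⟨_, ⟨dx, hdx1, hdx2, rfl⟩, _, ⟨dy, hdy1, hdy2, rfl⟩, ?_, ?_, rfl⟩
      · exact hdivposs _ _ _ hP hxy
      · rintro w ⟨d, h1, h2, rfl⟩
        rcases hcons (pt d) ⟨d, h1, h2, rfl⟩ with h | h
        · exact Or.inl (hdivpos _ _ _ hP h)
        · exact Or.inr (hdivpos _ _ _ hP h)
    have hg := hT₀ hmem
    have hrw : pt dy - pt dx = P * (Int.fract ((dy:ℝ) * θ) - Int.fract ((dx:ℝ) * θ)) := by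
      show P * _ - P * _ = _; ring
    rw [hrw]
    exact Finset.mem_coe.mpr (Finset.mem_image.mpr ⟨_, Finset.mem_coe.mp hg, rfl⟩)
  -- piece structure
  have htmon : ∀ j : ℕ, j ≤ ℓ → ∀ i : ℕ, i ≤ j → t i ≤ t j := by
    intro j
    induction j with
    | zero => intro _ i hi; have h0 : i = 0 := Nat.le_zero.mp hi; rw [h0]
    | succ k ih =>
      intro hk i hi
      rcases Nat.eq_or_lt_of_le hi with rfl | hlt
      · exact le_refl _
      · exact le_trans (ih (by omega) i (by omega)) (le_of_lt (htmono k (by omega)))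
  have hIsub : ∀ i, i < ℓ → Set.Ico (t i) (t (i+1)) ⊆ Set.Ico 0 P := by
    intro i hi x hx
    refine ⟨le_trans ?_ hx.1, lt_of_lt_of_le hx.2 ?_⟩
    · rw [← ht0]; exact htmon i (by omega) 0 (by omega)
    · rw [← htl]; exact htmon ℓ (le_refl _) (i+1) (by omega)
  have hcover : ∀ x ∈ Set.Ico (0:ℝ) P, ∃ i, i < ℓ ∧ x ∈ Set.Ico (t i) (t (i+1)) := by
    have key : ∀ k : ℕ, ∀ x : ℝ, t 0 ≤ x → x < t k →
        ∃ i, i < k ∧ x ∈ Set.Ico (t i) (t (i+1)) := by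
      intro k
      induction k with
      | zero => intro x h0 h1; exact absurd (lt_of_le_of_lt h0 h1) (lt_irrefl _)
      | succ k ih =>
        intro x h0 h1
        by_cases hx : t k ≤ x
        · exact ⟨k, Nat.lt_succ_self k, hx, h1⟩
        · obtain ⟨i, hi, hmem⟩ := ih x h0 (not_le.mp hx)
          exact ⟨i, by omega, hmem⟩
    intro x hx
    obtain ⟨i, hi, hm'⟩ := key ℓ x (by rw [ht0]; exact hx.1) (by rw [htl]; exact hx.2)
    exact ⟨i, hi, hm'⟩
  have hdisj : ∀ i j, i < ℓ → j < ℓ → i ≠ j →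
      ∀ x ∈ Set.Ico (t i) (t (i+1)), x ∉ Set.Ico (t j) (t (j+1)) := by
    intro i j hi hj hne x hxi hxj
    rcases Nat.lt_or_ge i j with h | h
    · have ht' : t (i+1) ≤ t j := htmon j (by omega) (i+1) (by omega)
      have := hxi.2; have := hxj.1; linarith
    · have hij : j < i := by omega
      have ht' : t (j+1) ≤ t i := htmon i (by omega) (j+1) (by omega)
      have := hxi.1; have := hxj.2; linarith
  have hm0 : ∀ i, i < ℓ → m i ≠ 0 := by
    intro i hi hm
    have hti := htmono i hi
    have h1 : t i ∈ Set.Ico (t i) (t (i+1)) := ⟨le_refl _, hti⟩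
    have hmid : (t i + t (i+1))/2 ∈ Set.Ico (t i) (t (i+1)) := ⟨by linarith, by linarith⟩
    have e1 := hpiece i hi _ h1
    have e2 := hpiece i hi _ hmid
    rw [hm, zero_mul, zero_add] at e1 e2
    have heq : f (t i) = f ((t i + t (i+1))/2) := by rw [e1, e2]
    have := hinj (hIsub i hi h1) (hIsub i hi hmid) heq
    linarith [this]
  -- intermediate value within a piece
  have hIVT : ∀ i, i < ℓ → ∀ x ∈ Set.Ico (t i) (t (i+1)), ∀ x' ∈ Set.Ico (t i) (t (i+1)),
      ∀ w, min (f x) (f x') ≤ w → w ≤ max (f x) (f x') →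
      ∃ z ∈ Set.Ico (t i) (t (i+1)), f z = w := by
    intro i hi x hx x' hx' w hw1 hw2
    have hfx := hpiece i hi x hx
    have hfx' := hpiece i hi x' hx'
    have hm := hm0 i hi
    set z := (w - c i)/(m i) with hz
    have hmz : m i * z = w - c i := by rw [hz]; field_simp
    have hz1 : t i ≤ z := by
      rcases lt_or_gt_of_ne hm with hneg | hpos
      · have b1 : f x ≤ m i * t i + c i := by
          rw [hfx]; have := mul_le_mul_of_nonpos_left hx.1 hneg.le; linarith
        have b2 : f x' ≤ m i * t i + c i := by
          rw [hfx']; have := mul_le_mul_of_nonpos_left hx'.1 hneg.le; linarith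
        have hwb : w ≤ m i * t i + c i := le_trans hw2 (max_le b1 b2)
        exact hdivneg _ _ _ hneg (by linarith [hmz])
      · have b1 : m i * t i + c i ≤ f x := by
          rw [hfx]; have := mul_le_mul_of_nonneg_left hx.1 hpos.le; linarith
        have b2 : m i * t i + c i ≤ f x' := by
          rw [hfx']; have := mul_le_mul_of_nonneg_left hx'.1 hpos.le; linarith
        have hwb : m i * t i + c i ≤ w := le_trans (le_min b1 b2) hw1
        exact hdivpos _ _ _ hpos (by linarith [hmz])
    have hz2 : z < t (i+1) := by
      rcases lt_or_gt_of_ne hm with hneg | hpos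
      · have b1 : m i * t (i+1) + c i < f x := by
          rw [hfx]; have := mul_lt_mul_of_neg_left hx.2 hneg; linarith
        have b2 : m i * t (i+1) + c i < f x' := by
          rw [hfx']; have := mul_lt_mul_of_neg_left hx'.2 hneg; linarith
        have hwb : m i * t (i+1) + c i < w := lt_of_lt_of_le (lt_min b1 b2) hw1
        exact hdivnegs _ _ _ hneg (by linarith [hmz])
      · have b1 : f x < m i * t (i+1) + c i := by
          rw [hfx]; have := mul_lt_mul_of_pos_left hx.2 hpos; linarith
        have b2 : f x' < m i * t (i+1) + c i := by
          rw [hfx']; have := mul_lt_mul_of_pos_left hx'.2 hpos; linarith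
        have hwb : w < m i * t (i+1) + c i := lt_of_le_of_lt hw2 (max_lt b1 b2)
        exact hdivposs _ _ _ hpos (by linarith [hmz])
    refine ⟨z, ⟨hz1, hz2⟩, ?_⟩
    rw [hpiece i hi z ⟨hz1, hz2⟩]; linarith [hmz]
  -- separation of pieces in value space
  have hsep : ∀ i j, i < ℓ → j < ℓ → i ≠ j →
      ∀ x ∈ Set.Ico (t i) (t (i+1)), ∀ y ∈ Set.Ico (t j) (t (j+1)),
      ∀ x' ∈ Set.Ico (t i) (t (i+1)), ∀ y' ∈ Set.Ico (t j) (t (j+1)),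
      f x < f y → f x' < f y' := by
    intro i j hi hj hne x hx y hy x' hx' y' hy' hxy
    by_contra hc
    push_neg at hc
    rcases le_or_gt (f x) (f y') with h1 | h1
    · obtain ⟨z, hzI, hzf⟩ := hIVT i hi x hx x' hx' (f y')
        (le_trans (min_le_left _ _) h1) (le_trans hc (le_max_right _ _))
      have hzy := hinj (hIsub i hi hzI) (hIsub j hj hy') hzf
      exact hdisj i j hi hj hne z hzI (hzy ▸ hy')
    · obtain ⟨z, hzI, hzf⟩ := hIVT j hj y hy y' hy' (f x)
        (le_trans (min_le_right _ _) h1.le) (le_trans hxy.le (le_max_left _ _))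
      have hzx := hinj (hIsub j hj hzI) (hIsub i hi hx) hzf
      exact hdisj j i hj hi (Ne.symm hne) z hzI (hzx ▸ hx)
  -- the finsets
  set Sj : ℕ → Set ℝ := fun j => f '' (X ∩ Set.Ico (t j) (t (j+1))) with hSj
  set E : ℝ := sInf (orbitSet f α 0 N) - sInf (Set.range f) + sSup (Set.range f) -
      sSup (orbitSet f α 0 N) with hE
  set φ : ℕ → ℝ := fun j => if sInf (Sj j) = sInf (orbitSet f α 0 N) then E
      else sInf (Sj j) - sSup {s | s ∈ orbitSet f α 0 N ∧ s < sInf (Sj j)} with hφ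
  set Mags : Finset ℝ := (Finset.range ℓ).image (fun i => |m i|) with hM
  set A : Finset ℝ := Finset.image₂ (· * ·) Mags T with hA
  set B : Finset ℝ := (Finset.range ℓ).image φ with hB
  have hSbdd : BddBelow (orbitSet f α 0 N) := hSfin.bddBelow
  have hsubset : gapSet f α 0 N ⊆ ↑(A ∪ B) := by
    intro g hg
    rw [Finset.coe_union]
    rcases hg with hg | hg
    · -- a consecutive gap
      obtain ⟨u, huS, v, hvS, huv, hcons, rfl⟩ := hg
      rw [hSX] at huS hvS
      obtain ⟨x, hxX, hfx⟩ := huS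
      obtain ⟨y, hyX, hfy⟩ := hvS
      obtain ⟨i, hi, hxI⟩ := hcover x (hXsub hxX)
      obtain ⟨j, hj, hyI⟩ := hcover y (hXsub hyX)
      have hxS : ∀ z, z ∈ X → f z ∈ orbitSet f α 0 N := by
        intro z hz; rw [hSX]; exact Set.mem_image_of_mem f hz
      by_cases hij : i = j
      · -- interior gap
        subst hij
        left
        have hfx' := hpiece i hi x hxI
        have hfy' := hpiece i hi y hyI
        have hmagmem : |m i| ∈ Mags := Finset.mem_image.mpr ⟨i, Finset.mem_range.mpr hi, rfl⟩
        rcases lt_or_gt_of_ne (hm0 i hi) with hmneg | hmpos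
        · -- negative slope : y < x
          have hyx : y < x := by
            apply hdivnegs _ _ _ hmneg
            have : f x < f y := by rw [hfx, hfy]; exact huv
            rw [hfx', hfy'] at this; linarith
          have hXcons : ∀ z ∈ X, z ≤ y ∨ x ≤ z := by
            intro z hz
            by_contra hzc
            push_neg at hzc
            obtain ⟨hzy, hzx⟩ := hzc
            have hzI : z ∈ Set.Ico (t i) (t (i+1)) := ⟨le_trans hyI.1 hzy.le, lt_trans hzx hxI.2⟩
            have hfz := hpiece i hi z hzI
            rcases hcons _ (hxS z hz) with h | h
            · -- f z ≤ u = f x ⇒ x ≤ z, contra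
              have : m i * z ≤ m i * x := by rw [← hfx] at h; rw [hfz, hfx'] at h; linarith
              have := hdivneg _ _ _ hmneg this
              linarith
            · have : m i * y ≤ m i * z := by rw [← hfy] at h; rw [hfz, hfy'] at h; linarith
              have := hdivneg _ _ _ hmneg this
              linarith
          have hgT := hXT ⟨y, hyX, x, hxX, hyx, hXcons, rfl⟩
          have hrw : v - u = |m i| * (x - y) := by
            rw [abs_of_neg hmneg, ← hfx, ← hfy, hfx', hfy']; ring
          rw [hrw]
          exact Finset.mem_coe.mpr
            (Finset.mem_image₂.mpr ⟨|m i|, hmagmem, x - y, Finset.mem_coe.mp hgT, rfl⟩)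
        · -- positive slope : x < y
          have hxy : x < y := by
            apply hdivposs _ _ _ hmpos
            have : f x < f y := by rw [hfx, hfy]; exact huv
            rw [hfx', hfy'] at this; linarith
          have hXcons : ∀ z ∈ X, z ≤ x ∨ y ≤ z := by
            intro z hz
            by_contra hzc
            push_neg at hzc
            obtain ⟨hzx, hzy⟩ := hzc
            have hzI : z ∈ Set.Ico (t i) (t (i+1)) := ⟨le_trans hxI.1 hzx.le, lt_trans hzy hyI.2⟩
            have hfz := hpiece i hi z hzI
            rcases hcons _ (hxS z hz) with h | h
            · have : m i * z ≤ m i * x := by rw [← hfx] at h; rw [hfz, hfx'] at h; linarith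
              have := hdivpos _ _ _ hmpos this
              linarith
            · have : m i * y ≤ m i * z := by rw [← hfy] at h; rw [hfz, hfy'] at h; linarith
              have := hdivpos _ _ _ hmpos this
              linarith
          have hgT := hXT ⟨x, hxX, y, hyX, hxy, hXcons, rfl⟩
          have hrw : v - u = |m i| * (y - x) := by
            rw [abs_of_pos hmpos, ← hfx, ← hfy, hfx', hfy']; ring
          rw [hrw]
          exact Finset.mem_coe.mpr
            (Finset.mem_image₂.mpr ⟨|m i|, hmagmem, y - x, Finset.mem_coe.mp hgT, rfl⟩)
      · -- boundary gap
        right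
        have hvSj : v ∈ Sj j := ⟨y, ⟨hyX, hyI⟩, hfy⟩
        have hSjfin : (Sj j).Finite := (hXfin.inter_of_left _).image f
        have hmin : sInf (Sj j) = v := by
          apply le_antisymm (csInf_le hSjfin.bddBelow hvSj)
          apply le_csInf ⟨v, hvSj⟩
          rintro w ⟨y', ⟨hy'X, hy'I⟩, rfl⟩
          by_contra hcw
          push_neg at hcw
          have huw : u < f y' := by
            have := hsep i j hi hj hij x hxI y hyI x hxI y' hy'I (by rw [hfx, hfy]; exact huv)
            rw [hfx] at this; exact this
          rcases hcons _ (hxS y' hy'X) with h | h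
          · linarith
          · linarith
        have hneq : ¬ (sInf (Sj j) = sInf (orbitSet f α 0 N)) := by
          rw [hmin]
          intro hcontra
          have h1 : sInf (orbitSet f α 0 N) ≤ u := by
            apply csInf_le hSbdd
            rw [hSX]; exact ⟨x, hxX, hfx⟩
          rw [← hcontra] at h1
          linarith
        have hpred : sSup {s | s ∈ orbitSet f α 0 N ∧ s < sInf (Sj j)} = u := by
          rw [hmin]
          have huS' : u ∈ orbitSet f α 0 N := by rw [hSX]; exact ⟨x, hxX, hfx⟩
          have hmemQ : u ∈ {s | s ∈ orbitSet f α 0 N ∧ s < v} := ⟨huS', huv⟩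
          apply le_antisymm
          · apply csSup_le ⟨u, hmemQ⟩
            rintro w ⟨hwS, hwv⟩
            rcases hcons w hwS with h | h
            · exact h
            · linarith
          · exact le_csSup ((hSfin.subset (fun w hw => hw.1)).bddAbove) hmemQ
        have hφj : φ j = v - u := by
          simp only [hφ]
          rw [if_neg hneq, hpred, hmin]
        rw [← hφj]
        exact Finset.mem_coe.mpr (Finset.mem_image.mpr ⟨j, Finset.mem_range.mpr hj, rfl⟩)
    · -- extremal gap
      right
      have hgE : g = E := hg
      have hminS := hSne.csInf_mem hSfin
      have hminS' : sInf (orbitSet f α 0 N) ∈ f '' X := by rw [← hSX]; exact hminS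
      obtain ⟨x₁, hx₁X, hfx₁⟩ := hminS'
      obtain ⟨j₀, hj₀, hx₁I⟩ := hcover x₁ (hXsub hx₁X)
      have hmemSj : sInf (orbitSet f α 0 N) ∈ Sj j₀ := ⟨x₁, ⟨hx₁X, hx₁I⟩, hfx₁⟩
      have h1 : sInf (Sj j₀) = sInf (orbitSet f α 0 N) := by
        apply le_antisymm
        · exact csInf_le ((hXfin.inter_of_left _).image f).bddBelow hmemSj
        · apply le_csInf ⟨_, hmemSj⟩
          rintro w ⟨y', ⟨hy'X, -⟩, rfl⟩
          apply csInf_le hSbdd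
          rw [hSX]; exact ⟨y', hy'X, rfl⟩
      have hφj : φ j₀ = E := by simp only [hφ]; rw [if_pos h1]
      rw [hgE, ← hφj]
      exact Finset.mem_coe.mpr (Finset.mem_image.mpr ⟨j₀, Finset.mem_range.mpr hj₀, rfl⟩)
  calc (gapSet f α 0 N).ncard ≤ ((A ∪ B : Finset ℝ) : Set ℝ).ncard :=
        Set.ncard_le_ncard hsubset (Finset.finite_toSet _)
    _ = (A ∪ B).card := Set.ncard_coe_finset _
    _ ≤ A.card + B.card := Finset.card_union_le _ _
    _ ≤ 3 * μ + ℓ := by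
        have h1 : A.card ≤ Mags.card * T.card := Finset.card_image₂_le _ _ _
        have h2 : Mags.card = μ := hμ.symm
        have h3 : B.card ≤ ℓ := le_trans Finset.card_image_le (by simp)
        have h4 : Mags.card * T.card ≤ μ * 3 := by
          rw [h2]; exact Nat.mul_le_mul_left μ hTcard
        omega
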